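/- Let ν* ∈ P_+ be an equilibrium measure for G and let (a_k)_{k≥0} be a Leja sequence for G. Then for every integer n ≥ 1, G(σ_n − ν*, σ_n − ν*) ≤ (1/n)(M(G) − G(ν*,ν*)). -/

import Mathlib

open Finset

section Aux

variable {X : Type*} [Fintype X] [DecidableEq X]

/-- Energy bilinear form. -/
def Eg (G : X → X → ℝ) (μ ν : X → ℝ) : ℝ := ∑ x, ∑ y, μ x * G x y * ν y

lemma Eg_comm (G : X → X → ℝ) (hGsym : ∀ x y, G x y = G y x) (μ ν : X → ℝ) :
    Eg G μ ν = Eg G ν μ := by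
  unfold Eg
  rw [Finset.sum_comm]
  exact Finset.sum_congr rfl fun x _ => Finset.sum_congr rfl fun y _ => by
    rw [hGsym]; ring

lemma Eg_left (G : X → X → ℝ) (μ ν : X → ℝ) :
    Eg G μ ν = ∑ x, μ x * ∑ y, G x y * ν y := by
  unfold Eg
  exact Finset.sum_congr rfl fun x _ => by
    rw [Finset.mul_sum]
    exact Finset.sum_congr rfl fun y _ => by ring

lemma Eg_combo (G : X → X → ℝ) (s t : ℝ) (μ ν : X → ℝ) :
    Eg G (fun x => s * μ x + t * ν x) (fun x => s * μ x + t * ν x)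
      = s^2 * Eg G μ μ + s*t * Eg G μ ν + s*t * Eg G ν μ + t^2 * Eg G ν ν := by
  unfold Eg
  simp only [Finset.mul_sum, ← Finset.sum_add_distrib]
  exact Finset.sum_congr rfl fun x _ => Finset.sum_congr rfl fun y _ => by ring

lemma Eg_sub_sub (G : X → X → ℝ) (μ ν : X → ℝ) :
    Eg G (fun x => μ x - ν x) (fun x => μ x - ν x)
      = Eg G μ μ - Eg G μ ν - Eg G ν μ + Eg G ν ν := by
  unfold Eg
  simp only [← Finset.sum_sub_distrib, ← Finset.sum_add_distrib]
  exact Finset.sum_congr rfl fun x _ => Finset.sum_congr rfl fun y _ => by ring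

/-- For an interior equilibrium measure, the potential is constant. -/
lemma equilibrium_potential_const (G : X → X → ℝ) (hGsym : ∀ x y, G x y = G y x)
    (νs : X → ℝ) (hνs_pos : ∀ x, 0 < νs x) (hνs_sum : ∑ x, νs x = 1)
    (hmin : ∀ ν : X → ℝ, (∀ x, 0 ≤ ν x) → ∑ x, ν x = 1 →
      ∑ x, ∑ y, νs x * G x y * νs y ≤ ∑ x, ∑ y, ν x * G x y * ν y)
    (x : X) : ∑ y, G x y * νs y = ∑ x, ∑ y, νs x * G x y * νs y := by
  set I : ℝ := ∑ x, ∑ y, νs x * G x y * νs y with hI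
  have hIE : I = Eg G νs νs := rfl
  set g : X → ℝ := fun w => ∑ y, G w y * νs y with hgdef
  -- Step 1: I ≤ g x for all x
  have step1 : ∀ w : X, I ≤ g w := by
    intro w
    by_contra h
    push_neg at h
    set d : ℝ := g w - I with hd
    have hdneg : d < 0 := by simp [hd]; linarith
    set δ : X → ℝ := fun y => if y = w then 1 else 0 with hδ
    have hEδν : Eg G δ νs = g w := by
      rw [Eg_left]
      simp [hδ]; rfl
    have hEνδ : Eg G νs δ = g w := by
      rw [Eg_comm G hGsym, hEδν]
    have hEδδ : Eg G δ δ = G w w := by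
      unfold Eg
      simp [hδ]
    set C : ℝ := G w w - 2 * g w + I with hC
    set t : ℝ := min 1 (-d / (|C| + 1)) with ht
    have hCpos : (0:ℝ) < |C| + 1 := by positivity
    have htpos : 0 < t := by
      apply lt_min one_pos
      apply div_pos (by linarith) hCpos
    have htle1 : t ≤ 1 := min_le_left _ _
    have htle : t ≤ -d / (|C| + 1) := min_le_right _ _
    -- the perturbed measure
    set ν : X → ℝ := fun y => (1 - t) * νs y + t * δ y with hν
    have hνnn : ∀ y, 0 ≤ ν y := by
      intro y
      have h0 : (0:ℝ) ≤ δ y := by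
        simp only [hδ]
        split <;> norm_num
      have h1 : 0 ≤ (1 - t) * νs y := mul_nonneg (by linarith) (hνs_pos y).le
      have h2 : 0 ≤ t * δ y := mul_nonneg htpos.le h0
      exact add_nonneg h1 h2
    have hνsum : ∑ y, ν y = 1 := by
      simp only [hν]
      rw [Finset.sum_add_distrib, ← Finset.mul_sum, ← Finset.mul_sum, hνs_sum]
      simp [hδ]
    have hle := hmin ν hνnn hνsum
    have hEν : Eg G ν ν = I + t * (2 * d + t * C) := by
      have := Eg_combo G (1 - t) t νs δ
      rw [hIE]
      calc Eg G ν ν = Eg G (fun y => (1-t) * νs y + t * δ y) (fun y => (1-t) * νs y + t * δ y) := rfl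
        _ = (1-t)^2 * Eg G νs νs + (1-t)*t * Eg G νs δ + (1-t)*t * Eg G δ νs + t^2 * Eg G δ δ := this
        _ = Eg G νs νs + t * (2 * d + t * C) := by
            rw [hEδν, hEνδ, hEδδ]
            have : Eg G νs νs = I := hIE.symm
            rw [this]
            simp only [hd, hC]
            ring
    have hle' : I ≤ Eg G ν ν := hle
    rw [hEν] at hle'
    have h2 : 0 ≤ 2 * d + t * C := by nlinarith
    have htC : t * C ≤ -d := by
      have h3 : t * C ≤ t * |C| := mul_le_mul_of_nonneg_left (le_abs_self C) htpos.le
      have h4 : t * |C| ≤ t * (|C| + 1) := by nlinarith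
      have h5 : t * (|C| + 1) ≤ -d := by
        rw [← div_mul_cancel₀ (-d) (ne_of_gt hCpos)]
        exact mul_le_mul_of_nonneg_right htle hCpos.le
      linarith
    linarith
  -- Step 2: equality
  have h1 : ∑ w, νs w * g w = I := by
    rw [hI, hgdef]
    exact (Finset.sum_congr rfl fun w _ => by
      rw [Finset.mul_sum]
      exact Finset.sum_congr rfl fun y _ => by ring).symm
  have hsum0 : ∑ w, νs w * (g w - I) = 0 := by
    have : ∑ w, νs w * (g w - I) = (∑ w, νs w * g w) - (∑ w, νs w) * I := by
      rw [Finset.sum_mul, ← Finset.sum_sub_distrib]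
      exact Finset.sum_congr rfl fun w _ => by ring
    rw [this, h1, hνs_sum, one_mul, sub_self]
  have heach := (Finset.sum_eq_zero_iff_of_nonneg (fun w _ =>
    mul_nonneg (hνs_pos w).le (by linarith [step1 w]))).mp hsum0 x (Finset.mem_univ x)
  have : g x - I = 0 := by
    rcases mul_eq_zero.mp heach with h | h
    · exact absurd h (ne_of_gt (hνs_pos x))
    · exact h
  have : g x = I := by linarith
  exact this

end Aux

/-- If `ν* ∈ P₊` is an equilibrium measure for `G` and `(a_k)` is a Leja
sequence for `G`, then for every `n ≥ 1`,
`G(σₙ − ν*, σₙ − ν*) ≤ (1/n)(M(G) − G(ν*,ν*))`, where `σₙ` puts mass `1/n` at each of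
`a_0,…,a_{n−1}` (with multiplicity) and `M(G) = max_x |G(x,x)|`. -/
theorem leja_energy_convergence {X : Type*} [Fintype X] [Nonempty X] [DecidableEq X]
    (G : X → X → ℝ) (hGsym : ∀ x y, G x y = G y x)
    (νs : X → ℝ) (hνs_pos : ∀ x, 0 < νs x) (hνs_sum : ∑ x, νs x = 1)
    (hmin : ∀ ν : X → ℝ, (∀ x, 0 ≤ ν x) → ∑ x, ν x = 1 →
      ∑ x, ∑ y, νs x * G x y * νs y ≤ ∑ x, ∑ y, ν x * G x y * ν y)
    (a : ℕ → X)
    (hleja : ∀ k : ℕ, 1 ≤ k → ∀ x : X,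
      ∑ j ∈ Finset.range k, G (a k) (a j) ≤ ∑ j ∈ Finset.range k, G x (a j))
    (n : ℕ) (hn : 1 ≤ n) :
    ∑ x, ∑ y,
        ((∑ j ∈ Finset.range n, if a j = x then (1 : ℝ) else 0) / n - νs x) * G x y *
          ((∑ j ∈ Finset.range n, if a j = y then (1 : ℝ) else 0) / n - νs y)
      ≤ (1 / n) *
        ((Finset.univ.sup' Finset.univ_nonempty fun x => |G x x|) -
          ∑ x, ∑ y, νs x * G x y * νs y) := by
  classical
  set I : ℝ := ∑ x, ∑ y, νs x * G x y * νs y with hI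
  set M : ℝ := Finset.univ.sup' Finset.univ_nonempty fun x => |G x x| with hM
  have hg : ∀ x, ∑ y, G x y * νs y = I :=
    equilibrium_potential_const G hGsym νs hνs_pos hνs_sum hmin
  have hg' : ∀ x, ∑ y, νs y * G y x = I := by
    intro x
    rw [← hg x]
    exact Finset.sum_congr rfl fun y _ => by rw [hGsym x y]; ring
  set σ : X → ℝ := fun x => (∑ j ∈ Finset.range n, if a j = x then (1 : ℝ) else 0) / n
    with hσ
  have hnpos : (0:ℝ) < n := by exact_mod_cast hn
  have hn0 : (n:ℝ) ≠ 0 := ne_of_gt hnpos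
  -- sums against σ
  have hσsum : ∀ h : X → ℝ, ∑ x, σ x * h x = (∑ j ∈ Finset.range n, h (a j)) / n := by
    intro h
    have : ∑ x, σ x * h x
        = (∑ x, ∑ j ∈ Finset.range n, (if a j = x then (1:ℝ) else 0) * h x) / n := by
      rw [Finset.sum_div]
      exact Finset.sum_congr rfl fun x _ => by
        simp only [hσ]
        rw [div_mul_eq_mul_div, Finset.sum_mul]
    rw [this, Finset.sum_comm]
    congr 1
    exact Finset.sum_congr rfl fun j _ => by simp
  -- expand the quadratic form
  have hLHS : (∑ x, ∑ y, (σ x - νs x) * G x y * (σ y - νs y))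
      = Eg G σ σ - Eg G σ νs - Eg G νs σ + Eg G νs νs :=
    Eg_sub_sub G σ νs
  have hEνν : Eg G νs νs = I := rfl
  have hσtot : ∑ x, σ x = 1 := by
    have := hσsum (fun _ => (1:ℝ))
    simpa [div_self hn0] using this
  have hEσν : Eg G σ νs = I := by
    rw [Eg_left]
    have : ∑ x, σ x * ∑ y, G x y * νs y = ∑ x, σ x * I :=
      Finset.sum_congr rfl fun x _ => by rw [hg x]
    rw [this, ← Finset.sum_mul, hσtot, one_mul]
  have hEνσ : Eg G νs σ = I := by rw [Eg_comm G hGsym, hEσν]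
  -- compute Eg σ σ
  have hEσσ : Eg G σ σ = (∑ j ∈ Finset.range n, ∑ k ∈ Finset.range n, G (a j) (a k)) / n^2 := by
    rw [Eg_left]
    have hinner : ∀ x, ∑ y, G x y * σ y = (∑ k ∈ Finset.range n, G x (a k)) / n := by
      intro x
      have := hσsum (fun y => G x y)
      calc ∑ y, G x y * σ y = ∑ y, σ y * G x y :=
            Finset.sum_congr rfl fun y _ => by ring
        _ = (∑ k ∈ Finset.range n, G x (a k)) / n := this
    have : ∑ x, σ x * ∑ y, G x y * σ y
        = ∑ x, σ x * ((∑ k ∈ Finset.range n, G x (a k)) / n) :=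
      Finset.sum_congr rfl fun x _ => by rw [hinner x]
    rw [this]
    have : ∑ x, σ x * ((∑ k ∈ Finset.range n, G x (a k)) / n)
        = (∑ x, σ x * (∑ k ∈ Finset.range n, G x (a k))) / n := by
      rw [Finset.sum_div]
      exact Finset.sum_congr rfl fun x _ => by ring
    rw [this, hσsum (fun x => ∑ k ∈ Finset.range n, G x (a k))]
    rw [div_div]
    ring_nf
  -- the key induction bound
  have hMd : ∀ x : X, G x x ≤ M :=
    fun x => le_trans (le_abs_self _) (Finset.le_sup' (fun x => |G x x|) (Finset.mem_univ x))
  have hcross : ∀ m : ℕ, ∑ k ∈ Finset.range m, G (a m) (a k) ≤ m * I := by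
    intro m
    rcases Nat.eq_zero_or_pos m with hm | hm
    · subst hm; simp
    · have h1 := hleja m hm
      calc ∑ k ∈ Finset.range m, G (a m) (a k)
          = ∑ x, νs x * ∑ k ∈ Finset.range m, G (a m) (a k) := by
            rw [← Finset.sum_mul, hνs_sum, one_mul]
        _ ≤ ∑ x, νs x * ∑ k ∈ Finset.range m, G x (a k) :=
            Finset.sum_le_sum fun x _ =>
              mul_le_mul_of_nonneg_left (h1 x) (hνs_pos x).le
        _ = ∑ k ∈ Finset.range m, ∑ x, νs x * G x (a k) := by
            rw [← Finset.sum_comm]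
            exact Finset.sum_congr rfl fun x _ => Finset.mul_sum _ _ _
        _ = ∑ k ∈ Finset.range m, I :=
            Finset.sum_congr rfl fun k _ => hg' (a k)
        _ = m * I := by
            rw [Finset.sum_const, Finset.card_range, nsmul_eq_mul]
  have hT : ∀ m : ℕ, ∑ j ∈ Finset.range m, ∑ k ∈ Finset.range m, G (a j) (a k)
      ≤ m * M + m * ((m:ℝ) - 1) * I := by
    intro m
    induction m with
    | zero => simp
    | succ m ih =>
      have hsplit : ∑ j ∈ Finset.range (m+1), ∑ k ∈ Finset.range (m+1), G (a j) (a k)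
          = (∑ j ∈ Finset.range m, ∑ k ∈ Finset.range m, G (a j) (a k))
            + (∑ j ∈ Finset.range m, G (a j) (a m))
            + (∑ k ∈ Finset.range m, G (a m) (a k)) + G (a m) (a m) := by
        rw [Finset.sum_range_succ]
        rw [show (∑ j ∈ Finset.range m, ∑ k ∈ Finset.range (m+1), G (a j) (a k))
            = ∑ j ∈ Finset.range m, ((∑ k ∈ Finset.range m, G (a j) (a k)) + G (a j) (a m))
          from Finset.sum_congr rfl fun j _ => Finset.sum_range_succ _ _]
        rw [Finset.sum_add_distrib, Finset.sum_range_succ]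
        ring
      have hc1 : ∑ j ∈ Finset.range m, G (a j) (a m) ≤ m * I := by
        have : ∑ j ∈ Finset.range m, G (a j) (a m)
            = ∑ j ∈ Finset.range m, G (a m) (a j) :=
          Finset.sum_congr rfl fun j _ => hGsym _ _
        rw [this]; exact hcross m
      have hc2 := hcross m
      have hd := hMd (a m)
      rw [hsplit]
      push_cast
      nlinarith [ih]
  -- put it together
  have hfinal : Eg G σ σ - I ≤ (1 / n) * (M - I) := by
    rw [hEσσ]
    have hb := hT n
    have hn2 : (0:ℝ) < (n:ℝ)^2 := by positivity
    rw [div_sub' (hc := ne_of_gt hn2), div_le_iff₀ hn2] at *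
    have : (1 / n) * (M - I) * (n:ℝ)^2 = (n:ℝ) * (M - I) := by
      field_simp
    rw [this]
    nlinarith [hb]
  calc ∑ x, ∑ y, (σ x - νs x) * G x y * (σ y - νs y)
      = Eg G σ σ - Eg G σ νs - Eg G νs σ + Eg G νs νs := hLHS
    _ = Eg G σ σ - I := by rw [hEσν, hEνσ, hEνν]; ring
    _ ≤ (1 / n) * (M - I) := hfinal
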